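/- arXiv:1703.07535 — 5 statements merged into one kernel-verified Lean document; each statement's English description precedes it below -/
import Mathlib

section
/- For nonzero positive semidefinite operators ρ and σ on ℂ^n, if the compression of σ to the support of ρ is positive definite (as an operator on supp ρ), then there exists a strictly positive (positive definite) operator R such that σ ≥ RρR in the Loewner order. -/
open Matrix
open scoped ComplexOrder

/-- Any PSD complex matrix is dominated by a positive multiple of the identity. -/
lemma exists_smul_one_sub_posSemidef {n : ℕ} {A : Matrix (Fin n) (Fin n) ℂ}
    (hA : A.PosSemidef) :
    ∃ c : ℝ, 0 < c ∧ (((c : ℂ) • 1 - A) : Matrix (Fin n) (Fin n) ℂ).PosSemidef := by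
  have hH := hA.1
  set U : Matrix (Fin n) (Fin n) ℂ := (hH.eigenvectorUnitary : Matrix (Fin n) (Fin n) ℂ) with hU
  have hUU : U * star U = 1 := (Matrix.mem_unitaryGroup_iff).mp hH.eigenvectorUnitary.2
  set d : Fin n → ℝ := hH.eigenvalues with hd
  set c : ℝ := (∑ i, d i) + 1 with hc
  have hd0 : ∀ i, 0 ≤ d i := hA.eigenvalues_nonneg
  have hdc : ∀ i, d i ≤ c := by
    intro i
    have : d i ≤ ∑ j, d j := Finset.single_le_sum (fun j _ => hd0 j) (Finset.mem_univ i)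
    linarith
  have hcpos : 0 < c := by
    have : 0 ≤ ∑ i, d i := Finset.sum_nonneg fun i _ => hd0 i
    linarith
  refine ⟨c, hcpos, ?_⟩
  have key : ((c : ℂ) • 1 - A) = U * diagonal (fun i => ((c - d i : ℝ) : ℂ)) * star U := by
    have : diagonal (fun i => ((c - d i : ℝ) : ℂ)) =
        (c : ℂ) • 1 - diagonal (RCLike.ofReal ∘ d) := by
      ext i j
      simp only [Matrix.sub_apply, Matrix.smul_apply, Matrix.one_apply, Matrix.diagonal_apply,
        Function.comp_apply, smul_eq_mul]
      split_ifs <;> simp [RCLike.ofReal_sub, RCLike.ofReal_mul]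
    rw [this, Matrix.mul_sub, Matrix.sub_mul, Matrix.mul_smul, Matrix.smul_mul, mul_one, hUU,
      ← (show A = U * diagonal (RCLike.ofReal ∘ d) * star U from hH.spectral_theorem)]
  rw [key]
  refine (Matrix.PosSemidef.diagonal ?_).mul_mul_conjTranspose_same U
  intro i
  simp only [Pi.zero_apply]
  exact_mod_cast sub_nonneg.mpr (hdc i)

lemma posSemidef_real_smul {n : ℕ} {A : Matrix (Fin n) (Fin n) ℂ} {t : ℝ}
    (ht : 0 ≤ t) (hA : A.PosSemidef) : ((t : ℂ) • A).PosSemidef := by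
  refine Matrix.PosSemidef.of_dotProduct_mulVec_nonneg ?_ ?_
  · show ((t : ℂ) • A)ᴴ = _
    rw [conjTranspose_smul, hA.1.eq]
    congr 1
    simp [Complex.conj_ofReal]
  · intro x
    rw [smul_mulVec, dotProduct_smul, smul_eq_mul]
    exact mul_nonneg (by exact_mod_cast ht) (hA.dotProduct_mulVec_nonneg x)

lemma posDef_real_smul {n : ℕ} {A : Matrix (Fin n) (Fin n) ℂ} {t : ℝ}
    (ht : 0 < t) (hA : A.PosDef) : ((t : ℂ) • A).PosDef := by
  refine Matrix.PosDef.of_dotProduct_mulVec_pos ?_ ?_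
  · show ((t : ℂ) • A)ᴴ = _
    rw [conjTranspose_smul, hA.1.eq]
    congr 1
    simp [Complex.conj_ofReal]
  · intro x hx
    rw [smul_mulVec, dotProduct_smul, smul_eq_mul]
    exact mul_pos (by exact_mod_cast ht) (hA.dotProduct_mulVec_pos hx)

lemma conj_sqrt_posSemidef {n : ℕ} {σ : Matrix (Fin n) (Fin n) ℂ} {c : ℝ}
    (hσ : σ.PosSemidef) (hle : (((c : ℂ) • 1 - σ) : Matrix (Fin n) (Fin n) ℂ).PosSemidef) :
    ((c : ℂ) • σ - σ * σ).PosSemidef := by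
  have key : ∀ s : Matrix (Fin n) (Fin n) ℂ, sᴴ = s → s * s = σ →
      ((c : ℂ) • σ - σ * σ).PosSemidef := by
    intro s hsh hss
    have h2 := hle.mul_mul_conjTranspose_same s
    rw [hsh] at h2
    have h3 : s * ((c : ℂ) • 1 - σ) * s = (c : ℂ) • σ - σ * σ := by
      rw [Matrix.mul_sub, Matrix.sub_mul, mul_smul_comm, smul_mul_assoc, Matrix.mul_one, hss,
        ← hss]
      congr 1
      simp only [Matrix.mul_assoc]
    rwa [h3] at h2
  open scoped MatrixOrder in
  exact key (CFC.sqrt σ) (Matrix.nonneg_iff_posSemidef.mp (CFC.sqrt_nonneg σ)).1.eq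
    (CFC.sqrt_mul_sqrt_self σ (Matrix.nonneg_iff_posSemidef.mpr hσ))

/-- `μ ≪ ν`: the compression of `ν` to the support of `μ` is positive definite, i.e.
the quadratic form of `ν` is strictly positive on every nonzero vector of `supp μ = ran μ`. -/
def AbsCont {n : ℕ} (μ ν : Matrix (Fin n) (Fin n) ℂ) : Prop :=
  ∀ x ∈ LinearMap.range μ.mulVecLin, x ≠ 0 → 0 < (star x ⬝ᵥ ν.mulVec x).re

/-- If `ρ ≪ σ` then there is a positive definite `R` with `σ ≥ R ρ R` in the Loewner order. -/
theorem exists_posDef_conj_le_of_absCont {n : ℕ}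
    (ρ σ : Matrix (Fin n) (Fin n) ℂ)
    (hρ : ρ.PosSemidef) (hσ : σ.PosSemidef) (hρ0 : ρ ≠ 0) (hσ0 : σ ≠ 0)
    (h : AbsCont ρ σ) :
    ∃ R : Matrix (Fin n) (Fin n) ℂ, R.PosDef ∧ (σ - R * ρ * R).PosSemidef := by
  classical
  have hH := hρ.1
  set U : Matrix (Fin n) (Fin n) ℂ := (hH.eigenvectorUnitary : Matrix (Fin n) (Fin n) ℂ) with hU
  have hUU : U * star U = 1 := (Matrix.mem_unitaryGroup_iff).mp hH.eigenvectorUnitary.2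
  have hUU' : star U * U = 1 := (Matrix.mem_unitaryGroup_iff').mp hH.eigenvectorUnitary.2
  set d : Fin n → ℝ := hH.eigenvalues with hd
  set e : Fin n → ℂ := fun i => if d i = 0 then 1 else 0 with he
  set g : Fin n → ℂ := fun i => if d i = 0 then 0 else (RCLike.ofReal (d i) : ℂ)⁻¹ with hg
  set P : Matrix (Fin n) (Fin n) ℂ := U * diagonal e * star U with hP
  have hρspec : ρ = U * diagonal (RCLike.ofReal ∘ d) * star U := hH.spectral_theorem
  have hPpsd : P.PosSemidef := by
    refine (Matrix.PosSemidef.diagonal ?_).mul_mul_conjTranspose_same U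
    intro i
    simp only [he, Pi.zero_apply]
    split_ifs <;> norm_num
  have hmul : ∀ f₁ f₂ : Fin n → ℂ,
      (U * diagonal f₁ * star U) * (U * diagonal f₂ * star U)
        = U * diagonal (fun i => f₁ i * f₂ i) * star U := by
    intro f₁ f₂
    calc (U * diagonal f₁ * star U) * (U * diagonal f₂ * star U)
        = U * diagonal f₁ * ((star U * U) * (diagonal f₂ * star U)) := by
          simp only [Matrix.mul_assoc]
      _ = U * (diagonal f₁ * diagonal f₂) * star U := by
          rw [hUU', Matrix.one_mul]; simp only [Matrix.mul_assoc]
      _ = U * diagonal (fun i => f₁ i * f₂ i) * star U := by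
          rw [diagonal_mul_diagonal]
  have hρP : ρ * P = 0 := by
    rw [hρspec, hP, hmul]
    have : (fun i => (RCLike.ofReal ∘ d) i * e i) = (fun _ => (0:ℂ)) := by
      funext i
      simp only [Function.comp_apply, he]
      split_ifs with hi <;> simp [hi]
    rw [this, diagonal_zero, Matrix.mul_zero, Matrix.zero_mul]
  have hPρ : P * ρ = 0 := by
    rw [hρspec, hP, hmul]
    have : (fun i => e i * (RCLike.ofReal ∘ d) i) = (fun _ => (0:ℂ)) := by
      funext i
      simp only [Function.comp_apply, he]
      split_ifs with hi <;> simp [hi]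
    rw [this, diagonal_zero, Matrix.mul_zero, Matrix.zero_mul]
  have hρg : ρ * (U * diagonal g * star U) = 1 - P := by
    rw [hρspec, hmul]
    have : (fun i => (RCLike.ofReal ∘ d) i * g i) = (fun i => 1 - e i) := by
      funext i
      simp only [Function.comp_apply, he, hg]
      split_ifs with hi
      · simp [hi]
      · rw [sub_zero, mul_inv_cancel₀]
        exact RCLike.ofReal_ne_zero.mpr hi
    rw [this, hP]
    have hdiag : diagonal (fun i => 1 - e i) = 1 - diagonal e := by
      rw [← diagonal_one, diagonal_sub]
    rw [hdiag, Matrix.mul_sub, Matrix.sub_mul, Matrix.mul_one, hUU]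
  -- (σ + P) is positive definite
  have hApd : (σ + P).PosDef := by
    refine Matrix.PosDef.of_dotProduct_mulVec_pos (hσ.1.add hPpsd.1) (fun x hx => ?_)
    have h1 : 0 ≤ star x ⬝ᵥ (σ + P) *ᵥ x := (hσ.add hPpsd).dotProduct_mulVec_nonneg x
    rcases h1.lt_or_eq with h1 | h1
    · exact h1
    exfalso
    rw [add_mulVec, dotProduct_add] at h1
    have hz := (add_eq_zero_iff_of_nonneg (hσ.dotProduct_mulVec_nonneg x) (hPpsd.dotProduct_mulVec_nonneg x)).mp h1.symm
    have hPx : P *ᵥ x = 0 := (hPpsd.dotProduct_mulVec_zero_iff x).mp hz.2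
    have hxran : x ∈ LinearMap.range ρ.mulVecLin := by
      refine ⟨(U * diagonal g * star U) *ᵥ x, ?_⟩
      rw [mulVecLin_apply, mulVec_mulVec, hρg, sub_mulVec, one_mulVec, hPx, sub_zero]
    have := h x hxran hx
    rw [hz.1] at this
    simp at this
  obtain ⟨cρ, hcρ, hρle⟩ := exists_smul_one_sub_posSemidef hρ
  obtain ⟨cσ, hcσ, hσle⟩ := exists_smul_one_sub_posSemidef hσ
  set t : ℝ := (Real.sqrt (cρ * cσ))⁻¹ with htdef
  have htpos : 0 < t := by
    apply inv_pos.mpr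
    exact Real.sqrt_pos.mpr (mul_pos hcρ hcσ)
  have ht2 : t * t * (cρ * cσ) = 1 := by
    rw [htdef, ← mul_inv, Real.mul_self_sqrt (mul_pos hcρ hcσ).le]
    exact inv_mul_cancel₀ (mul_pos hcρ hcσ).ne'
  refine ⟨(t : ℂ) • (σ + P), posDef_real_smul htpos hApd, ?_⟩
  have hRρR : ((t : ℂ) • (σ + P)) * ρ * ((t : ℂ) • (σ + P))
      = ((t * t : ℝ) : ℂ) • (σ * ρ * σ) := by
    have h1 : (σ + P) * ρ * (σ + P) = σ * ρ * σ := by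
      rw [add_mul, hPρ, add_zero, mul_add, Matrix.mul_assoc σ ρ P, hρP, Matrix.mul_zero, add_zero]
    rw [smul_mul_assoc, smul_mul_assoc, mul_smul_comm, h1, smul_smul]
    push_cast
    ring_nf
  rw [hRρR]
  -- the two PSD ingredients
  have hPSD1 : ((cρ : ℂ) • (σ * σ) - σ * ρ * σ).PosSemidef := by
    have h2 := hρle.mul_mul_conjTranspose_same σ
    rw [hσ.1.eq] at h2
    have h3 : σ * ((cρ : ℂ) • 1 - ρ) * σ = (cρ : ℂ) • (σ * σ) - σ * ρ * σ := by
      rw [Matrix.mul_sub, Matrix.sub_mul, mul_smul_comm, smul_mul_assoc, Matrix.mul_one]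
    rwa [h3] at h2
  have hPSD2 : ((cσ : ℂ) • σ - σ * σ).PosSemidef := conj_sqrt_posSemidef hσ hσle
  have final : σ - ((t * t : ℝ) : ℂ) • (σ * ρ * σ)
      = ((t * t * cρ : ℝ) : ℂ) • ((cσ : ℂ) • σ - σ * σ)
        + ((t * t : ℝ) : ℂ) • ((cρ : ℂ) • (σ * σ) - σ * ρ * σ) := by
    have hc : ((t * t * cρ * cσ : ℝ) : ℂ) = 1 := by
      rw [show t * t * cρ * cσ = t * t * (cρ * cσ) by ring, ht2]
      norm_num
    nth_rewrite 1 [show σ = (1 : ℂ) • σ from (one_smul ℂ σ).symm, ← hc]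
    push_cast
    module
  rw [final]
  exact (posSemidef_real_smul (by positivity) hPSD2).add
    (posSemidef_real_smul (by positivity) hPSD1)
end

section
/- For nonzero positive semidefinite operators ρ and σ on ℂ^n, ρ ≪ σ (the compression of σ to supp ρ is positive definite) if and only if there exists a positive semidefinite operator R with ρ = RσR. -/
open Matrix
open scoped ComplexOrder

namespace Matrix.IsHermitian

variable {m : Type*} [Fintype m] [DecidableEq m] {A : Matrix m m ℂ} (hA : A.IsHermitian)

lemma myCfc_mul (f g : ℝ → ℝ) :
    hA.cfc f * hA.cfc g = hA.cfc (fun t => f t * g t) := by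
  unfold Matrix.IsHermitian.cfc
  have h1 : (star (eigenvectorUnitary hA : Matrix m m ℂ)) *
      (eigenvectorUnitary hA : Matrix m m ℂ) = 1 :=
    Unitary.star_mul_self_of_mem (SetLike.coe_mem _)
  simp only [Unitary.conjStarAlgAut_apply, Unitary.coe_star]
  simp only [mul_assoc]
  rw [← mul_assoc (star (eigenvectorUnitary hA : Matrix m m ℂ)), h1, one_mul,
    ← mul_assoc (diagonal _), diagonal_mul_diagonal]
  rw [show (fun i => (RCLike.ofReal ∘ f ∘ hA.eigenvalues) i * (RCLike.ofReal ∘ g ∘ hA.eigenvalues) i) =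
    RCLike.ofReal ∘ (fun t => f t * g t) ∘ hA.eigenvalues from funext fun i => by simp]

lemma myCfc_congr {f g : ℝ → ℝ} (h : ∀ i, f (hA.eigenvalues i) = g (hA.eigenvalues i)) :
    hA.cfc f = hA.cfc g := by
  unfold Matrix.IsHermitian.cfc
  rw [show (RCLike.ofReal ∘ f ∘ hA.eigenvalues : m → ℂ) = RCLike.ofReal ∘ g ∘ hA.eigenvalues from
    funext fun i => by simp [h i]]

lemma myCfc_id : hA.cfc id = A := by
  unfold Matrix.IsHermitian.cfc
  exact hA.spectral_theorem.symm

lemma myCfc_one : hA.cfc (fun _ => 1) = 1 := by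
  unfold Matrix.IsHermitian.cfc
  have h1 : (eigenvectorUnitary hA : Matrix m m ℂ) *
      (star (eigenvectorUnitary hA : Matrix m m ℂ)) = 1 :=
    Unitary.mul_star_self_of_mem (SetLike.coe_mem _)
  simpa [Function.comp_def] using h1

lemma myCfc_zero : hA.cfc (fun _ => 0) = 0 := by
  unfold Matrix.IsHermitian.cfc
  simp [Function.comp_def]

lemma myCfc_sub (f g : ℝ → ℝ) :
    hA.cfc (fun t => f t - g t) = hA.cfc f - hA.cfc g := by
  unfold Matrix.IsHermitian.cfc
  have h2 : (RCLike.ofReal ∘ (fun t => f t - g t) ∘ hA.eigenvalues : m → ℂ) =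
      fun i => (RCLike.ofReal ∘ f ∘ hA.eigenvalues : m → ℂ) i -
        (RCLike.ofReal ∘ g ∘ hA.eigenvalues : m → ℂ) i := funext fun i => by simp
  simp only [Unitary.conjStarAlgAut_apply]
  rw [h2, ← diagonal_sub, mul_sub, sub_mul]

lemma myCfc_posSemidef (f : ℝ → ℝ) (h : ∀ i, 0 ≤ f (hA.eigenvalues i)) :
    (hA.cfc f).PosSemidef := by
  unfold Matrix.IsHermitian.cfc
  simp only [Unitary.conjStarAlgAut_apply, Unitary.coe_star]
  rw [star_eq_conjTranspose]
  refine PosSemidef.mul_mul_conjTranspose_same (posSemidef_diagonal_iff.mpr fun i => ?_) _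
  simpa using h i

end Matrix.IsHermitian

section helpers

variable {m : Type*} [Fintype m] [DecidableEq m]

lemma herm_conj_quad {H M : Matrix m m ℂ} (hH : H.IsHermitian) (v : m → ℂ) :
    star v ⬝ᵥ ((H * M * H) *ᵥ v) = star (H *ᵥ v) ⬝ᵥ (M *ᵥ (H *ᵥ v)) := by
  rw [star_mulVec, hH.eq, ← mulVec_mulVec, dotProduct_mulVec, ← vecMul_vecMul,
    ← dotProduct_mulVec, mulVec_mulVec]

lemma sqrt_inv_mul_self {t : ℝ} (ht : 0 ≤ t) :
    (Real.sqrt t)⁻¹ * t * (Real.sqrt t)⁻¹ = if t = 0 then 0 else 1 := by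
  rcases eq_or_lt_of_le ht with h | h
  · simp [← h]
  · have h2 : (Real.sqrt t)⁻¹ * t * (Real.sqrt t)⁻¹ =
      (Real.sqrt t * Real.sqrt t)⁻¹ * t := by ring
    rw [if_neg h.ne', h2, Real.mul_self_sqrt ht, inv_mul_cancel₀ h.ne']

end helpers

/-- `ρ ≪ σ` iff there exists a positive semidefinite `R` with `ρ = R σ R`. -/
theorem absCont_iff_exists_posSemidef_conj {n : ℕ}
    (ρ σ : Matrix (Fin n) (Fin n) ℂ)
    (hρ : ρ.PosSemidef) (hσ : σ.PosSemidef) (hρ0 : ρ ≠ 0) (hσ0 : σ ≠ 0) :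
    AbsCont ρ σ ↔
      ∃ R : Matrix (Fin n) (Fin n) ℂ, R.PosSemidef ∧ ρ = R * σ * R := by
  constructor
  · -- forward direction
    intro h
    set r : Matrix (Fin n) (Fin n) ℂ := hρ.1.cfc Real.sqrt with hr_def
    have hr_psd : r.PosSemidef := hρ.1.myCfc_posSemidef _ (fun i => Real.sqrt_nonneg _)
    have hrr : r * r = ρ := by
      rw [hr_def, hρ.1.myCfc_mul,
        hρ.1.myCfc_congr (g := id) (fun i => Real.mul_self_sqrt (hρ.eigenvalues_nonneg i)),
        hρ.1.myCfc_id]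
    set G : Matrix (Fin n) (Fin n) ℂ := hρ.1.cfc (fun t => (Real.sqrt t)⁻¹) with hG_def
    have hρG : ρ * G = r := by
      conv_lhs => rw [← hρ.1.myCfc_id]
      rw [hρ.1.myCfc_mul]
      refine hρ.1.myCfc_congr (fun i => ?_)
      have h0 := hρ.eigenvalues_nonneg i
      rcases eq_or_lt_of_le h0 with h1 | h1
      · simp [← h1]
      · rw [id_eq]
        nth_rewrite 1 [← Real.mul_self_sqrt h0]
        rw [mul_assoc, mul_inv_cancel₀ (Real.sqrt_pos.mpr h1).ne', mul_one]
    have hS : (r * σ * r).PosSemidef := by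
      have := hσ.mul_mul_conjTranspose_same r
      rwa [hr_psd.1] at this
    set S : Matrix (Fin n) (Fin n) ℂ := r * σ * r with hS_def
    -- the key kernel fact
    have hK : ∀ z, S *ᵥ z = 0 → r *ᵥ z = 0 := by
      intro z hz
      by_contra hne
      have hmem : r *ᵥ z ∈ LinearMap.range ρ.mulVecLin :=
        ⟨G *ᵥ z, by rw [mulVecLin_apply, mulVec_mulVec, hρG]⟩
      have hpos := h _ hmem hne
      have hzero : star (r *ᵥ z) ⬝ᵥ σ *ᵥ (r *ᵥ z) = 0 := by
        rw [← herm_conj_quad hr_psd.1, ← hS_def, hz, dotProduct_zero]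
      rw [hzero] at hpos
      simp at hpos
    -- spectral projections of S
    set g : ℝ → ℝ := fun t => (Real.sqrt t)⁻¹ with hg_def
    set p : ℝ → ℝ := fun t => g t * t * g t with hp_def
    set T : Matrix (Fin n) (Fin n) ℂ := hS.1.cfc g with hT_def
    set Q : Matrix (Fin n) (Fin n) ℂ := hS.1.cfc (fun t => 1 - p t) with hQ_def
    have hT_psd : T.PosSemidef := hS.1.myCfc_posSemidef _ (fun i => by positivity)
    have hQ_psd : Q.PosSemidef := by
      refine hS.1.myCfc_posSemidef _ (fun i => ?_)
      have h0 := hS.eigenvalues_nonneg i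
      have h1 := sqrt_inv_mul_self h0
      simp only [hp_def, hg_def]
      rw [h1]
      split <;> norm_num
    have hSQ : S * Q = 0 := by
      conv_lhs => rw [show S = hS.1.cfc id from (hS.1.myCfc_id).symm]
      rw [hS.1.myCfc_mul, ← hS.1.myCfc_zero]
      refine hS.1.myCfc_congr (fun i => ?_)
      have h0 := hS.eigenvalues_nonneg i
      have h1 := sqrt_inv_mul_self h0
      simp only [hp_def, hg_def, id_eq]
      rw [h1]
      split <;> simp_all
    have hrQ : r * Q = 0 := by
      ext i j
      have hz : (r * Q) *ᵥ Pi.single j 1 = 0 := by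
        rw [← mulVec_mulVec]
        refine hK _ ?_
        rw [mulVec_mulVec, hSQ, zero_mulVec]
      have := congrFun hz i
      simpa [mulVec_single] using this
    have hQr : Q * r = 0 := by
      have h2 : (r * Q)ᴴ = 0 := by rw [hrQ, conjTranspose_zero]
      rwa [conjTranspose_mul, hQ_psd.1, hr_psd.1] at h2
    have hTST : T * S * T = hS.1.cfc p := by
      conv_lhs => rw [show S = hS.1.cfc id from (hS.1.myCfc_id).symm]
      rw [hS.1.myCfc_mul, hS.1.myCfc_mul]
      exact hS.1.myCfc_congr (fun i => by simp [hp_def])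
    have hPi : hS.1.cfc p = 1 - Q := by
      have h3 : hS.1.cfc (fun t => 1 - (1 - p t)) = hS.1.cfc (fun _ => 1) - Q :=
        hS.1.myCfc_sub _ _
      have h4 : hS.1.cfc (fun t => 1 - (1 - p t)) = hS.1.cfc p :=
        hS.1.myCfc_congr (fun i => by ring)
      rw [← h4, h3, hS.1.myCfc_one]
    refine ⟨r * T * r, ?_, ?_⟩
    · have := hT_psd.mul_mul_conjTranspose_same r
      rwa [hr_psd.1] at this
    · have h5 : r * T * r * σ * (r * T * r) = r * (T * S * T) * r := by
        rw [hS_def]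
        simp only [mul_assoc]
      rw [h5, hTST, hPi, mul_sub, sub_mul, mul_one, hrr, mul_assoc, hQr, mul_zero, sub_zero]
  · -- reverse direction
    rintro ⟨R, hR, hEq⟩
    intro x hx hx0
    obtain ⟨y, hy⟩ := hx
    rw [mulVecLin_apply] at hy
    by_contra hcon
    have hnn : (0 : ℂ) ≤ star x ⬝ᵥ σ *ᵥ x := hσ.dotProduct_mulVec_nonneg x
    rw [Complex.le_def] at hnn
    simp only [Complex.zero_re, Complex.zero_im] at hnn
    have hre : (star x ⬝ᵥ σ *ᵥ x).re = 0 := le_antisymm (not_lt.mp hcon) hnn.1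
    have hzero : star x ⬝ᵥ σ *ᵥ x = 0 := Complex.ext hre hnn.2.symm
    have hσx : σ *ᵥ x = 0 := (hσ.dotProduct_mulVec_zero_iff x).mp hzero
    set s : Matrix (Fin n) (Fin n) ℂ := hσ.1.cfc Real.sqrt with hs_def
    have hs_psd : s.PosSemidef := hσ.1.myCfc_posSemidef _ (fun i => Real.sqrt_nonneg _)
    have hss : s * s = σ := by
      rw [hs_def, hσ.1.myCfc_mul,
        hσ.1.myCfc_congr (g := id) (fun i => Real.mul_self_sqrt (hσ.eigenvalues_nonneg i)),
        hσ.1.myCfc_id]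
    have hsx : s *ᵥ x = 0 := by
      have h1 : star (s *ᵥ x) ⬝ᵥ (s *ᵥ x) = star x ⬝ᵥ σ *ᵥ x := by
        rw [star_mulVec, hs_psd.1, ← dotProduct_mulVec, mulVec_mulVec, hss]
      exact dotProduct_star_self_eq_zero.mp (by rw [h1, hzero])
    set w : Fin n → ℂ := (s * R) *ᵥ y with hw_def
    have hassoc : R * σ * R = R * s * (s * R) := by
      rw [← hss]
      simp only [mul_assoc]
    have hx_eq : x = (R * s) *ᵥ w := by
      rw [hw_def, mulVec_mulVec, ← hy, hEq, hassoc]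
    have hsw : (s * R * s) *ᵥ w = 0 := by
      have h2 := hsx
      rw [hx_eq, mulVec_mulVec] at h2
      simpa only [mul_assoc] using h2
    have hquad : star (s *ᵥ w) ⬝ᵥ R *ᵥ (s *ᵥ w) = 0 := by
      rw [← herm_conj_quad hs_psd.1 w, hsw, dotProduct_zero]
    have hRsw : R *ᵥ (s *ᵥ w) = 0 := (hR.dotProduct_mulVec_zero_iff _).mp hquad
    apply hx0
    rw [hx_eq, ← mulVec_mulVec, hRsw]
end

section
/- For positive definite matrices A and B, the operator geometric mean A # B := √A √(√A⁻¹ B √A⁻¹) √A is the unique positive definite solution X of the equation B = X A⁻¹ X. -/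
open Matrix
open scoped ComplexOrder

/-- The positive semidefinite square root of a positive semidefinite matrix
(junk value `0` on non-positive-semidefinite input). -/
noncomputable def msqrt {n : ℕ} (A : Matrix (Fin n) (Fin n) ℂ) : Matrix (Fin n) (Fin n) ℂ :=
  letI := Classical.propDecidable A.PosSemidef
  if h : A.PosSemidef then
    (h.1.eigenvectorUnitary : Matrix (Fin n) (Fin n) ℂ) *
      diagonal ((↑) ∘ (√·) ∘ h.1.eigenvalues) *
      (star h.1.eigenvectorUnitary : Matrix (Fin n) (Fin n) ℂ)
  else 0

/-- The operator geometric mean `A # B = √A √(√A⁻¹ B √A⁻¹) √A`. -/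
noncomputable def geomMean {n : ℕ} (A B : Matrix (Fin n) (Fin n) ℂ) :
    Matrix (Fin n) (Fin n) ℂ :=
  msqrt A * msqrt (msqrt A⁻¹ * B * msqrt A⁻¹) * msqrt A

open MatrixOrder in
noncomputable def Matrix.PosSemidef.sqrt {n : ℕ} {A : Matrix (Fin n) (Fin n) ℂ}
    (_h : A.PosSemidef) : Matrix (Fin n) (Fin n) ℂ := CFC.sqrt A

open MatrixOrder in
lemma Matrix.PosSemidef.posSemidef_sqrt {n : ℕ} {A : Matrix (Fin n) (Fin n) ℂ}
    (h : A.PosSemidef) : h.sqrt.PosSemidef :=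
  nonneg_iff_posSemidef.mp (CFC.sqrt_nonneg A)

open MatrixOrder in
lemma Matrix.PosSemidef.sqrt_mul_self {n : ℕ} {A : Matrix (Fin n) (Fin n) ℂ}
    (h : A.PosSemidef) : h.sqrt * h.sqrt = A :=
  CFC.sqrt_mul_sqrt_self A (nonneg_iff_posSemidef.mpr h)

open MatrixOrder in
lemma Matrix.PosSemidef.eq_sqrt_of_sq_eq {n : ℕ} {A B : Matrix (Fin n) (Fin n) ℂ}
    (hA : A.PosSemidef) (hB : B.PosSemidef) (hAB : A ^ 2 = B) : A = hB.sqrt :=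
  (CFC.sqrt_unique (by rw [← pow_two, hAB]) (nonneg_iff_posSemidef.mpr hA)).symm

open MatrixOrder in
lemma msqrt_of_posSemidef {n : ℕ} {A : Matrix (Fin n) (Fin n) ℂ} (h : A.PosSemidef) :
    msqrt A = h.sqrt := by
  unfold msqrt
  rw [dif_pos h, Matrix.PosSemidef.sqrt, CFC.sqrt_eq_real_sqrt A (nonneg_iff_posSemidef.mpr h),
    cfcₙ_eq_cfc, h.1.cfc_eq]
  rfl

lemma posDef_of_posSemidef_isUnit {m : ℕ} {M : Matrix (Fin m) (Fin m) ℂ}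
    (hM : M.PosSemidef) (h : IsUnit M.det) : M.PosDef :=
  hM.posDef_iff_isUnit.mpr ((Matrix.isUnit_iff_isUnit_det M).mpr h)

lemma posDef_conj {m : ℕ} {M N : Matrix (Fin m) (Fin m) ℂ}
    (hM : M.PosDef) (hN : IsUnit N.det) : (Nᴴ * M * N).PosDef :=
  hM.conjTranspose_mul_mul_same (mulVec_injective_of_isUnit ((Matrix.isUnit_iff_isUnit_det N).mpr hN))

/-- For positive definite `A, B`, the geometric mean `A # B` is the unique positive
definite solution `X` of `B = X A⁻¹ X`. -/
theorem geomMean_unique_solution {n : ℕ}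
    (A B : Matrix (Fin n) (Fin n) ℂ) (hA : A.PosDef) (hB : B.PosDef) :
    (geomMean A B).PosDef ∧ B = geomMean A B * A⁻¹ * geomMean A B ∧
      ∀ X : Matrix (Fin n) (Fin n) ℂ, X.PosDef → B = X * A⁻¹ * X → X = geomMean A B := by
  set S := msqrt A with hSdef
  have hSsqrt : S = hA.posSemidef.sqrt := msqrt_of_posSemidef hA.posSemidef
  have hSpsd : S.PosSemidef := hSsqrt ▸ hA.posSemidef.posSemidef_sqrt
  have hSS : S * S = A := hSsqrt ▸ hA.posSemidef.sqrt_mul_self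
  have hSH : Sᴴ = S := hSpsd.1
  -- S is invertible
  have hSdet : IsUnit S.det := by
    have : S.det * S.det = A.det := by rw [← Matrix.det_mul, hSS]
    have hAdet : A.det ≠ 0 := ne_of_gt hA.det_pos
    refine isUnit_iff_ne_zero.mpr fun h => hAdet ?_
    rw [← this, h, mul_zero]
  have hSinv_cancel : S * S⁻¹ = 1 := Matrix.mul_nonsing_inv S hSdet
  have hSinv_cancel' : S⁻¹ * S = 1 := Matrix.nonsing_inv_mul S hSdet
  -- msqrt A⁻¹ = S⁻¹
  have hSinv_sq : S⁻¹ ^ 2 = A⁻¹ := by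
    rw [pow_two, ← Matrix.mul_inv_rev, hSS]
  have hSinvpsd : S⁻¹.PosSemidef := hSpsd.inv
  have hT : msqrt A⁻¹ = S⁻¹ := by
    rw [msqrt_of_posSemidef hA.inv.posSemidef]
    exact (hSinvpsd.eq_sqrt_of_sq_eq hA.inv.posSemidef hSinv_sq).symm
  have hSinvH : (S⁻¹)ᴴ = S⁻¹ := hSinvpsd.1
  have hSinvdet : IsUnit S⁻¹.det :=
    IsUnit.of_mul_eq_one S.det (by rw [← Matrix.det_mul, hSinv_cancel', Matrix.det_one])
  -- C := S⁻¹ B S⁻¹ is positive definite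
  set C := S⁻¹ * B * S⁻¹ with hCdef
  have hC : C.PosDef := by
    have := posDef_conj hB hSinvdet
    rwa [hSinvH] at this
  -- M := sqrt C
  set M := msqrt C with hMdef
  have hMsqrt : M = hC.posSemidef.sqrt := msqrt_of_posSemidef hC.posSemidef
  have hMpsd : M.PosSemidef := hMsqrt ▸ hC.posSemidef.posSemidef_sqrt
  have hMM : M * M = C := hMsqrt ▸ hC.posSemidef.sqrt_mul_self
  have hMdet : IsUnit M.det := by
    have : M.det * M.det = C.det := by rw [← Matrix.det_mul, hMM]
    have hCdet : C.det ≠ 0 := ne_of_gt hC.det_pos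
    refine isUnit_iff_ne_zero.mpr fun h => hCdet ?_
    rw [← this, h, mul_zero]
  have hMpd : M.PosDef := posDef_of_posSemidef_isUnit hMpsd hMdet
  -- geomMean A B = S * M * S
  have hG : geomMean A B = S * M * S := by
    rw [geomMean, hMdef, hCdef, ← hSdef, hT]
  have hGpd : (geomMean A B).PosDef := by
    rw [hG]
    have := posDef_conj hMpd hSdet
    rwa [hSH] at this
  have hAinv : A⁻¹ = S⁻¹ * S⁻¹ := by rw [← hSinv_sq, pow_two]
  have hSCS : S * C * S = B := by
    rw [hCdef, show S * (S⁻¹ * B * S⁻¹) * S = S * S⁻¹ * B * (S⁻¹ * S) from by noncomm_ring,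
      hSinv_cancel, hSinv_cancel', Matrix.one_mul, Matrix.mul_one]
  have hEq : B = geomMean A B * A⁻¹ * geomMean A B := by
    rw [hG, hAinv,
      show S * M * S * (S⁻¹ * S⁻¹) * (S * M * S) = S * (M * (S * S⁻¹) * (S⁻¹ * S * M)) * S
        from by noncomm_ring,
      hSinv_cancel, hSinv_cancel', Matrix.mul_one, Matrix.one_mul, hMM, hSCS]
  refine ⟨hGpd, hEq, fun X hX hXeq => ?_⟩
  -- uniqueness
  set Y := S⁻¹ * X * S⁻¹ with hYdef
  have hYpd : Y.PosDef := by
    have := posDef_conj hX hSinvdet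
    rwa [hSinvH] at this
  have hYsq : Y ^ 2 = C := by
    rw [pow_two, hYdef, hCdef, hXeq, hAinv]
    noncomm_ring [Matrix.mul_assoc]
  have hYM : Y = M := by
    rw [hMsqrt]
    exact hYpd.posSemidef.eq_sqrt_of_sq_eq hC.posSemidef hYsq
  have hXY : S * Y * S = X := by
    rw [hYdef, show S * (S⁻¹ * X * S⁻¹) * S = S * S⁻¹ * X * (S⁻¹ * S) by noncomm_ring,
      hSinv_cancel, hSinv_cancel', Matrix.one_mul, Matrix.mul_one]
  rw [hG, ← hYM, hXY]
end

section
/- With ρ = [[ρ₀,0],[0,0]] (ρ₀ positive definite) and σ = [[σ₀,α],[α*,β]] positive semidefinite with σ₀ positive definite, the absolutely continuous part σᵃ = [[σ₀, α],[α*, α* σ₀⁻¹ α]] satisfies σᵃ = R ρ R for the positive semidefinite operator R = E* [[σ₀ # ρ₀⁻¹, 0],[0, 0]] E, where E = [[I, σ₀⁻¹α],[0, I]]; in particular σᵃ ≪ ρ. -/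
open Matrix
open scoped ComplexOrder

/-- The block matrix `E = [[I, σ₀⁻¹ α],[0, I]]`. -/
noncomputable def Eblock {m k : ℕ} (σ₀ : Matrix (Fin m) (Fin m) ℂ)
    (α : Matrix (Fin m) (Fin k) ℂ) : Matrix (Fin m ⊕ Fin k) (Fin m ⊕ Fin k) ℂ :=
  fromBlocks 1 (σ₀⁻¹ * α) 0 1

/-- The operator `R = E* [[σ₀ # ρ₀⁻¹, 0],[0,0]] E`. -/
noncomputable def Rop {m k : ℕ} (ρ₀ σ₀ : Matrix (Fin m) (Fin m) ℂ)
    (α : Matrix (Fin m) (Fin k) ℂ) : Matrix (Fin m ⊕ Fin k) (Fin m ⊕ Fin k) ℂ :=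
  (Eblock σ₀ α)ᴴ * fromBlocks (geomMean σ₀ ρ₀⁻¹) 0 0 0 * Eblock σ₀ α

open scoped MatrixOrder

lemma msqrt_eq {n : ℕ} {A : Matrix (Fin n) (Fin n) ℂ} (hA : A.PosSemidef) :
    msqrt A = CFC.sqrt A := by
  rw [CFC.sqrt_eq_cfc, cfc_nnreal_eq_real _ A hA.nonneg, hA.1.cfc_eq]
  simp only [msqrt, dif_pos hA, IsHermitian.cfc, Unitary.conjStarAlgAut_apply, Real.coe_sqrt,
    Real.coe_toNNReal', Function.comp_def, max_eq_left (hA.eigenvalues_nonneg _)]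
  rfl

lemma msqrt_posSemidef {n : ℕ} {A : Matrix (Fin n) (Fin n) ℂ} (hA : A.PosSemidef) :
    (msqrt A).PosSemidef := by
  rw [msqrt_eq hA]; exact (CFC.sqrt_nonneg A).posSemidef

lemma msqrt_mul_self {n : ℕ} {A : Matrix (Fin n) (Fin n) ℂ} (hA : A.PosSemidef) :
    msqrt A * msqrt A = A := by
  rw [msqrt_eq hA]; exact CFC.sqrt_mul_sqrt_self A hA.nonneg

lemma msqrt_herm {n : ℕ} {A : Matrix (Fin n) (Fin n) ℂ} (hA : A.PosSemidef) :
    (msqrt A)ᴴ = msqrt A := (msqrt_posSemidef hA).1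

lemma msqrt_isUnit {n : ℕ} {A : Matrix (Fin n) (Fin n) ℂ} (hA : A.PosDef) :
    IsUnit (msqrt A) := by
  rw [isUnit_iff_isUnit_det]
  have : (msqrt A).det * (msqrt A).det = A.det := by
    rw [← det_mul, msqrt_mul_self hA.posSemidef]
  have hdet : IsUnit A.det := hA.det_pos.ne'.isUnit
  rw [← this] at hdet
  exact isUnit_of_mul_isUnit_left hdet

lemma msqrt_inv {n : ℕ} {A : Matrix (Fin n) (Fin n) ℂ} (hA : A.PosDef) :
    msqrt A⁻¹ = (msqrt A)⁻¹ := by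
  have hinv : ((msqrt A)⁻¹).PosSemidef := (msqrt_posSemidef hA.posSemidef).inv
  have hsq : ((msqrt A)⁻¹) ^ 2 = A⁻¹ := by
    rw [pow_two, ← Matrix.mul_inv_rev, msqrt_mul_self hA.posSemidef]
  rw [msqrt_eq hA.inv.posSemidef, msqrt_eq hA.posSemidef, hA.posSemidef.inv_sqrt]

lemma posDef_conj_s12 {n : ℕ} {A C : Matrix (Fin n) (Fin n) ℂ} (hA : A.PosDef)
    (hC : IsUnit C) : (Cᴴ * A * C).PosDef := by
  exact hA.conjTranspose_mul_mul_same (mulVec_injective_of_isUnit hC)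

lemma geomMean_key {n : ℕ} {A B : Matrix (Fin n) (Fin n) ℂ}
    (hA : A.PosDef) (hB : B.PosDef) :
    (geomMean A B⁻¹).PosSemidef ∧ geomMean A B⁻¹ * B * geomMean A B⁻¹ = A := by
  set S := msqrt A with hS
  have hSps := msqrt_posSemidef hA.posSemidef
  have hSu : IsUnit S := msqrt_isUnit hA
  have hSh : Sᴴ = S := hSps.1
  have hSS : S * S = A := msqrt_mul_self hA.posSemidef
  haveI := hSu.invertible
  haveI := hB.isUnit.invertible
  have hNpd : (S⁻¹ * B⁻¹ * S⁻¹).PosDef := by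
    have := posDef_conj_s12 hB.inv (isUnit_of_invertible S⁻¹)
    rwa [conjTranspose_nonsing_inv, hSh] at this
  have hNdef : msqrt A⁻¹ * B⁻¹ * msqrt A⁻¹ = S⁻¹ * B⁻¹ * S⁻¹ := by
    rw [msqrt_inv hA]
  set M := msqrt (S⁻¹ * B⁻¹ * S⁻¹) with hM
  have hMps : M.PosSemidef := msqrt_posSemidef hNpd.posSemidef
  have hMu : IsUnit M := msqrt_isUnit hNpd
  haveI := hMu.invertible
  have hMM : M * M = S⁻¹ * B⁻¹ * S⁻¹ := msqrt_mul_self hNpd.posSemidef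
  have hG : geomMean A B⁻¹ = S * M * S := by
    rw [geomMean, ← hS, hNdef, ← hM]
  constructor
  · rw [hG]
    simpa [hSh, Matrix.mul_assoc] using hMps.conjTranspose_mul_mul_same S
  · have hB' : S * B * S = M⁻¹ * M⁻¹ := by
      have : (S⁻¹ * B⁻¹ * S⁻¹)⁻¹ = S * B * S := by
        rw [Matrix.mul_inv_rev, Matrix.mul_inv_rev, Matrix.inv_inv_of_invertible,
          Matrix.inv_inv_of_invertible, Matrix.mul_assoc]
      rw [← this, ← hMM, Matrix.mul_inv_rev]
    rw [hG]
    have hMdet : IsUnit M.det := isUnit_iff_isUnit_det M |>.1 hMu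
    calc S * M * S * B * (S * M * S)
        = S * (M * (S * B * S) * M) * S := by noncomm_ring
      _ = A := by
          rw [hB', ← Matrix.mul_assoc M, Matrix.mul_nonsing_inv _ hMdet, Matrix.one_mul,
            Matrix.nonsing_inv_mul _ hMdet, Matrix.mul_one, hSS]

lemma fromBlocks_psd {m k : ℕ} {G : Matrix (Fin m) (Fin m) ℂ} (hG : G.PosSemidef) :
    (fromBlocks G 0 0 (0 : Matrix (Fin k) (Fin k) ℂ)).PosSemidef := by
  have h : fromBlocks G 0 0 (0 : Matrix (Fin k) (Fin k) ℂ) =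
      (fromBlocks (msqrt G) 0 0 0)ᴴ * fromBlocks (msqrt G) 0 0 0 := by
    rw [fromBlocks_conjTranspose, fromBlocks_multiply]
    simp [msqrt_herm hG, msqrt_mul_self hG]
  rw [h]
  exact posSemidef_conjTranspose_mul_self _


/-- With `ρ = [[ρ₀,0],[0,0]]` and `σ = [[σ₀,α],[α*,β]]` positive semidefinite,
`ρ₀, σ₀` positive definite, the absolutely continuous part
`σᵃ = [[σ₀, α],[α*, α* σ₀⁻¹ α]]` satisfies `σᵃ = R ρ R` with the positive semidefinite
`R = E* [[σ₀ # ρ₀⁻¹, 0],[0,0]] E`, `E = [[I, σ₀⁻¹ α],[0, I]]`; in particular `σᵃ ≪ ρ`. -/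
theorem ac_part_eq_conj {m k : ℕ}
    (ρ₀ σ₀ : Matrix (Fin m) (Fin m) ℂ) (α : Matrix (Fin m) (Fin k) ℂ)
    (β : Matrix (Fin k) (Fin k) ℂ)
    (hρ₀ : ρ₀.PosDef) (hσ₀ : σ₀.PosDef)
    (hσ : (fromBlocks σ₀ α αᴴ β).PosSemidef) :
    (Rop ρ₀ σ₀ α).PosSemidef ∧
    fromBlocks σ₀ α αᴴ (αᴴ * σ₀⁻¹ * α) =
      Rop ρ₀ σ₀ α * fromBlocks ρ₀ 0 0 0 * Rop ρ₀ σ₀ α := by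
  obtain ⟨hGps, hGkey⟩ := geomMean_key hσ₀ hρ₀
  set G := geomMean σ₀ ρ₀⁻¹ with hGdef
  have hσinv : σ₀⁻¹ᴴ = σ₀⁻¹ := by rw [conjTranspose_nonsing_inv, hσ₀.1]
  constructor
  · have := (fromBlocks_psd (k := k) hGps).conjTranspose_mul_mul_same (Eblock σ₀ α)
    simpa [Rop, Matrix.mul_assoc] using this
  · simp only [Rop, Eblock, fromBlocks_conjTranspose, fromBlocks_multiply,
      conjTranspose_mul, hσinv, conjTranspose_one, conjTranspose_zero,
      Matrix.mul_zero, Matrix.zero_mul, Matrix.mul_one, Matrix.one_mul,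
      add_zero, zero_add]
    rw [← hGdef]
    have hdet : IsUnit σ₀.det := hσ₀.det_pos.ne'.isUnit
    have e12 : G * ρ₀ * (G * (σ₀⁻¹ * α)) = α := by
      rw [← Matrix.mul_assoc, hGkey, Matrix.mul_nonsing_inv_cancel_left _ _ hdet]
    have e21 : αᴴ * σ₀⁻¹ * G * ρ₀ * G = αᴴ := by
      rw [Matrix.mul_assoc (αᴴ * σ₀⁻¹), Matrix.mul_assoc (αᴴ * σ₀⁻¹), hGkey, Matrix.mul_assoc, Matrix.nonsing_inv_mul _ hdet, Matrix.mul_one]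
    have e22 : αᴴ * σ₀⁻¹ * G * ρ₀ * (G * (σ₀⁻¹ * α)) = αᴴ * σ₀⁻¹ * α := by
      rw [← Matrix.mul_assoc, e21, ← Matrix.mul_assoc]
    rw [hGkey, e12, e21, e22, Matrix.mul_assoc]
end

section
/- Uniqueness of the quantum Lebesgue decomposition: suppose ρ ≪ σ, and σ = τ₁ + τ₁' = τ₂ + τ₂' are two decompositions of σ into positive semidefinite parts with τ₁ ≪ ρ, τ₂ ≪ ρ, and τ₁' ⊥ ρ, τ₂' ⊥ ρ. Then τ₁ = τ₂ and τ₁' = τ₂'. -/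
open Matrix
open scoped ComplexOrder

/-- `μ ⊥ ν`: `Tr (μ ν) = 0`. -/
def MutSing {n : ℕ} (μ ν : Matrix (Fin n) (Fin n) ℂ) : Prop := (μ * ν).trace = 0


lemma my_trace_ct_mul_self {m k : ℕ} (M : Matrix (Fin m) (Fin k) ℂ)
    (h : (Mᴴ * M).trace = 0) : M = 0 := by
  have h' : ∑ j, ∑ i, star (M i j) * M i j = 0 := by
    simpa [Matrix.trace, Matrix.mul_apply, Matrix.diag, Matrix.conjTranspose_apply] using h
  have hnn : ∀ j : Fin k, (0:ℂ) ≤ ∑ i, star (M i j) * M i j := fun j =>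
    Finset.sum_nonneg fun i _ => star_mul_self_nonneg _
  have h2 := (Fintype.sum_eq_zero_iff_of_nonneg hnn).mp h'
  ext i j
  have h3 := (Fintype.sum_eq_zero_iff_of_nonneg
    (fun i : Fin m => star_mul_self_nonneg (M i j))).mp (congrFun h2 j)
  have := congrFun h3 i
  simpa [mul_comm, mul_eq_zero] using this

open scoped MatrixOrder in
lemma psd_mul_eq_zero {n : ℕ} {A B : Matrix (Fin n) (Fin n) ℂ}
    (hA : A.PosSemidef) (hB : B.PosSemidef) (h : (A * B).trace = 0) : A * B = 0 := by
  set S := CFC.sqrt A with hS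
  set R := CFC.sqrt B with hR
  have hSh : Sᴴ = S := (CFC.sqrt_nonneg A).posSemidef.1
  have hRh : Rᴴ = R := (CFC.sqrt_nonneg B).posSemidef.1
  have hSR : S * R = 0 := by
    apply my_trace_ct_mul_self
    have key : ((S*R)ᴴ * (S*R)).trace = (A * B).trace := by
      rw [conjTranspose_mul, hSh, hRh]
      calc ((R*S)*(S*R)).trace
          = (S*R*(R*S)).trace := trace_mul_comm _ _
        _ = (S*(B*S)).trace := by
            rw [Matrix.mul_assoc S R (R*S), ← Matrix.mul_assoc R R S, (CFC.sqrt_mul_sqrt_self B hB.nonneg)]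
        _ = ((B*S)*S).trace := (trace_mul_comm (B*S) S).symm
        _ = (B*A).trace := by rw [Matrix.mul_assoc, (CFC.sqrt_mul_sqrt_self A hA.nonneg)]
        _ = (A*B).trace := trace_mul_comm _ _
    rw [key, h]
  calc A * B = S * (S * R) * R := by
        rw [← (CFC.sqrt_mul_sqrt_self A hA.nonneg), ← (CFC.sqrt_mul_sqrt_self B hB.nonneg)]; noncomm_ring
    _ = 0 := by rw [hSR]; simp

/-- Uniqueness of the quantum Lebesgue decomposition when `ρ ≪ σ`. -/
theorem lebesgue_decomposition_unique {n : ℕ}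
    (ρ σ τ₁ τ₁' τ₂ τ₂' : Matrix (Fin n) (Fin n) ℂ)
    (hρ : ρ.PosSemidef) (hσ : σ.PosSemidef) (hρ0 : ρ ≠ 0) (hσ0 : σ ≠ 0)
    (hAC : AbsCont ρ σ)
    (hτ₁ : τ₁.PosSemidef) (hτ₁' : τ₁'.PosSemidef)
    (hτ₂ : τ₂.PosSemidef) (hτ₂' : τ₂'.PosSemidef)
    (hdec₁ : σ = τ₁ + τ₁') (hdec₂ : σ = τ₂ + τ₂')
    (hac₁ : AbsCont τ₁ ρ) (hac₂ : AbsCont τ₂ ρ)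
    (hsing₁ : MutSing τ₁' ρ) (hsing₂ : MutSing τ₂' ρ) :
    τ₁ = τ₂ ∧ τ₁' = τ₂' := by
  have hz₁ : τ₁' * ρ = 0 := psd_mul_eq_zero hτ₁' hρ hsing₁
  have hz₂ : τ₂' * ρ = 0 := psd_mul_eq_zero hτ₂' hρ hsing₂
  have hz₁' : ρ * τ₁' = 0 := by
    have := congrArg conjTranspose hz₁
    rw [conjTranspose_mul, (hρ.1 : ρᴴ = ρ), (hτ₁'.1 : τ₁'ᴴ = τ₁'), conjTranspose_zero] at this
    exact this
  have hz₂' : ρ * τ₂' = 0 := by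
    have := congrArg conjTranspose hz₂
    rw [conjTranspose_mul, (hρ.1 : ρᴴ = ρ), (hτ₂'.1 : τ₂'ᴴ = τ₂'), conjTranspose_zero] at this
    exact this
  -- core lemma: for suitable w, τ *ᵥ v is determined by σ and w
  have main : ∀ (τ τ' : Matrix (Fin n) (Fin n) ℂ), σ = τ + τ' → τ' * ρ = 0 → ρ * τ' = 0 →
      AbsCont τ ρ → ∀ v w : Fin n → ℂ, w ∈ LinearMap.range ρ.mulVecLin →
      (ρ * σ) *ᵥ (w + v) = 0 → τ *ᵥ v = -(σ *ᵥ w) := by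
    intro τ τ' hdec hz hz' hac v w hw hρσ
    obtain ⟨y, hy⟩ := hw
    have hyw : ρ *ᵥ y = w := hy
    have hτ'w : τ' *ᵥ w = 0 := by
      rw [← hyw, Matrix.mulVec_mulVec, hz, Matrix.zero_mulVec]
    have hτw : τ *ᵥ w = σ *ᵥ w := by
      rw [hdec, Matrix.add_mulVec, hτ'w, add_zero]
    have hρz : ρ *ᵥ (τ *ᵥ (w + v)) = 0 := by
      have h1 : τ *ᵥ (w + v) = σ *ᵥ (w + v) - τ' *ᵥ (w + v) := by
        rw [hdec, Matrix.add_mulVec, add_sub_cancel_right]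
      rw [h1, Matrix.mulVec_sub, Matrix.mulVec_mulVec, Matrix.mulVec_mulVec, hρσ, hz',
        Matrix.zero_mulVec, sub_zero]
    have hz0 : τ *ᵥ (w + v) = 0 := by
      by_contra hne
      have hpos := hac (τ *ᵥ (w + v)) ⟨w + v, rfl⟩ hne
      have h0 : star (τ *ᵥ (w + v)) ⬝ᵥ ρ *ᵥ (τ *ᵥ (w + v)) = 0 := by
        rw [hρz, dotProduct_zero]
      rw [h0] at hpos
      simp at hpos
    have := hz0
    rw [Matrix.mulVec_add, hτw] at this
    exact eq_neg_of_add_eq_zero_right this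
  -- construct w for each v via surjectivity
  have hmv : ∀ v : Fin n → ℂ, τ₁ *ᵥ v = τ₂ *ᵥ v := by
    intro v
    set Rsp := LinearMap.range ρ.mulVecLin with hRsp
    have hmaps : ∀ x ∈ Rsp, (ρ * σ).mulVecLin x ∈ Rsp := by
      intro x hx
      exact ⟨σ *ᵥ x, by simp [Matrix.mulVecLin_apply, Matrix.mulVec_mulVec]⟩
    set f : Rsp →ₗ[ℂ] Rsp := ((ρ * σ).mulVecLin).restrict hmaps with hf
    have hinj : Function.Injective f := by
      rw [injective_iff_map_eq_zero]
      intro x hx0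
      have hx0' : (ρ * σ) *ᵥ (x : Fin n → ℂ) = 0 := by
        have := congrArg Subtype.val hx0
        simpa [hf, LinearMap.restrict_apply, Matrix.mulVecLin_apply] using this
      obtain ⟨y, hy⟩ := x.2
      have hdot : star (x : Fin n → ℂ) ⬝ᵥ σ *ᵥ (x : Fin n → ℂ) = 0 := by
        have hyx : ρ *ᵥ y = (x : Fin n → ℂ) := hy
        rw [← hyx, Matrix.star_mulVec, (hρ.1 : ρᴴ = ρ), ← Matrix.dotProduct_mulVec,
          Matrix.mulVec_mulVec, hyx, hx0', dotProduct_zero]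
      by_contra hne
      have hxne : (x : Fin n → ℂ) ≠ 0 := by
        intro h; exact hne (Subtype.ext h)
      have := hAC (x : Fin n → ℂ) x.2 hxne
      rw [hdot] at this
      simp at this
    have hsurj := (LinearMap.injective_iff_surjective).mp hinj
    obtain ⟨w, hwf⟩ := hsurj ⟨-((ρ * σ) *ᵥ v), ⟨-(σ *ᵥ v), by
      simp [Matrix.mulVecLin_apply, Matrix.mulVec_neg, Matrix.mulVec_mulVec]⟩⟩
    have hweq : (ρ * σ) *ᵥ (w : Fin n → ℂ) = -((ρ * σ) *ᵥ v) := by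
      have := congrArg Subtype.val hwf
      simpa [hf, LinearMap.restrict_apply, Matrix.mulVecLin_apply] using this
    have hρσ : (ρ * σ) *ᵥ ((w : Fin n → ℂ) + v) = 0 := by
      rw [Matrix.mulVec_add, hweq, neg_add_cancel]
    rw [main τ₁ τ₁' hdec₁ hz₁ hz₁' hac₁ v w w.2 hρσ,
      main τ₂ τ₂' hdec₂ hz₂ hz₂' hac₂ v w w.2 hρσ]
  have ht : τ₁ = τ₂ := by
    ext i j
    have := congrFun (hmv (Pi.single j 1)) i
    simpa [Matrix.mulVec_single] using this
  refine ⟨ht, ?_⟩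
  have : τ₁ + τ₁' = τ₂ + τ₂' := by rw [← hdec₁, ← hdec₂]
  rw [ht] at this
  exact add_left_cancel this
end
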